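/- Let cps be a constrained path schema over a finite alphabet Σ with segments p_1, …, p_k ∈ Σ*, loops l_1, …, l_k ∈ Σ^+ and constraint set D ⊆ ℕ^{k−1}, where D is presented in semilinear form by a finite set of base vectors B0 and period vectors P_1, …, P_α, all of whose components are at most M. Let ψ be an FO_Σ sentence of quantifier height q. Then L(cps) ∩ L(ψ) ≠ ∅ if and only if there exists n ∈ D with n_i ≤ M + (2^{q+1}+1)·α·M for every i ∈ {1,…,k−1} such that p_1 l_1^{n_1} ⋯ p_{k−1} l_{k−1}^{n_{k−1}} p_k l_k^ω ⊨ ψ. -/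

import Mathlib

namespace Stmt7

variable {Γ : Type*}

/-- `m`-fold concatenation of a finite word. -/
def lpow (u : List Γ) : ℕ → List Γ
  | 0 => []
  | m + 1 => u ++ lpow u m

/-- Concatenation of a finite word with an ω-word. -/
def wcat (u : List Γ) (w : ℕ → Γ) : ℕ → Γ := fun n =>
  if h : n < u.length then u.get ⟨n, h⟩ else w (n - u.length)

/-- Infinite repetition of a nonempty finite word. -/
def womega (u : List Γ) (hu : u ≠ []) : ℕ → Γ := fun n =>
  u.get ⟨n % u.length, Nat.mod_lt _ (List.length_pos_iff.mpr hu)⟩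

/-- The finite word `p 0 · (l 0)^(n 0) · ⋯ · p (i-1) · (l (i-1))^(n (i-1))`. -/
def schemaPrefix (p l : ℕ → List Γ) (n : ℕ → ℕ) : ℕ → List Γ
  | 0 => []
  | i + 1 => schemaPrefix p l n i ++ (p i ++ lpow (l i) (n i))

/-- The ω-word `p_1 l_1^{n_1} ⋯ p_{k-1} l_{k-1}^{n_{k-1}} p_k l_k^ω`
(with `0`-based indexing of the segments `p` and loops `l`). -/
def schemaWord (k : ℕ) (p l : ℕ → List Γ) (n : ℕ → ℕ) (h : l (k - 1) ≠ []) : ℕ → Γ :=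
  wcat (schemaPrefix p l n (k - 1) ++ p (k - 1)) (womega (l (k - 1)) h)

/-- Extension of a vector in `ℕ^d` to a function on all of `ℕ` (by `0`). -/
def extFun {d : ℕ} (n : Fin d → ℕ) : ℕ → ℕ := fun i => if h : i < d then n ⟨i, h⟩ else 0

/-- The language of the constrained path schema with segments `p`, loops `l`
and constraint set `D ⊆ ℕ^(k-1)`. -/
def cpsLang (k : ℕ) (p l : ℕ → List Γ) (D : Set (Fin (k - 1) → ℕ))
    (h : l (k - 1) ≠ []) : Set (ℕ → Γ) :=
  {w | ∃ n ∈ D, w = schemaWord k p l (extFun n) h}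

/-- Syntax of first-order logic `FO_Γ` over ω-words over `Γ`. -/
inductive FO (Γ : Type*) : Type _
  | letter : Γ → ℕ → FO Γ
  | succ : ℕ → ℕ → FO Γ
  | lt : ℕ → ℕ → FO Γ
  | eq : ℕ → ℕ → FO Γ
  | not : FO Γ → FO Γ
  | and : FO Γ → FO Γ → FO Γ
  | ex : ℕ → FO Γ → FO Γ

/-- Satisfaction of an FO formula on an ω-word under an assignment of variables
to positions. -/
def FO.Sat (w : ℕ → Γ) : FO Γ → (ℕ → ℕ) → Prop
  | .letter a z, f => w (f z) = a
  | .succ z z', f => f z' = f z + 1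
  | .lt z z', f => f z < f z'
  | .eq z z', f => f z = f z'
  | .not φ, f => ¬ FO.Sat w φ f
  | .and φ ψ, f => FO.Sat w φ f ∧ FO.Sat w ψ f
  | .ex z φ, f => ∃ pos : ℕ, FO.Sat w φ (Function.update f z pos)

/-- Quantifier height: maximal nesting depth of `∃`. -/
def FO.qh : FO Γ → ℕ
  | .letter _ _ => 0
  | .succ _ _ => 0
  | .lt _ _ => 0
  | .eq _ _ => 0
  | .not φ => FO.qh φ
  | .and φ ψ => max (FO.qh φ) (FO.qh ψ)
  | .ex _ φ => FO.qh φ + 1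

/-- Free variables of an FO formula. -/
def FO.free : FO Γ → Finset ℕ
  | .letter _ z => {z}
  | .succ z z' => {z, z'}
  | .lt z z' => {z, z'}
  | .eq z z' => {z, z'}
  | .not φ => FO.free φ
  | .and φ ψ => FO.free φ ∪ FO.free ψ
  | .ex z φ => (FO.free φ).erase z

/-- Satisfaction of a sentence (the assignment is irrelevant, so we fix one). -/
def FO.SatS (w : ℕ → Γ) (φ : FO Γ) : Prop := FO.Sat w φ fun _ => 0

/-- margin function -/
def marg (L r : ℕ) : ℕ := (2 ^ (r + 1) - 1) * L

lemma marg_succ (L r : ℕ) : marg L (r + 1) = 2 * marg L r + L := by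
  unfold marg
  have h1 : 1 ≤ 2 ^ (r + 1) := Nat.one_le_two_pow
  have h2 : 2 ^ (r + 1 + 1) = 2 * 2 ^ (r + 1) := by ring
  rw [h2, Nat.sub_mul, Nat.sub_mul, Nat.mul_sub, one_mul]
  have h3 : L ≤ 2 ^ (r + 1) * L := Nat.le_mul_of_pos_left L (by positivity)
  have h4 : 2 * 2 ^ (r + 1) * L = 2 * (2 ^ (r + 1) * L) := by ring
  omega

lemma marg_mono (L : ℕ) {r s : ℕ} (h : r ≤ s) : marg L r ≤ marg L s := by
  apply Nat.mul_le_mul_right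
  have := Nat.pow_le_pow_right (show 1 ≤ 2 by norm_num) (show r + 1 ≤ s + 1 by omega)
  omega

lemma le_marg {L : ℕ} (hL : 0 < L) (r : ℕ) : L ≤ marg L r := by
  have h1 : 2 ≤ 2 ^ (r + 1) := by
    calc 2 = 2 ^ 1 := rfl
      _ ≤ 2 ^ (r + 1) := Nat.pow_le_pow_right (by norm_num) (by omega)
  calc L = 1 * L := (one_mul L).symm
    _ ≤ (2 ^ (r + 1) - 1) * L := Nat.mul_le_mul_right L (by omega)

def CompatC (c x y x' y' : ℕ) : Prop :=
  x + y' = y + x' ∨ (x + c < y ∧ x' + c < y') ∨ (y + c < x ∧ y' + c < x')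

def GoodP (aa L N N' x x' : ℕ) : Prop :=
  (x < aa ∧ x' = x) ∨
  (aa ≤ x ∧ x < N ∧ aa ≤ x' ∧ x' < N' ∧ (x - aa) % L = (x' - aa) % L) ∨
  (N ≤ x ∧ N' ≤ x' ∧ x + N' = x' + N)

lemma compat_mono {c c' x y x' y' : ℕ} (h : c' ≤ c) :
    CompatC c x y x' y' → CompatC c' x y x' y' := by
  unfold CompatC; omega

lemma compat_swap {c x y x' y' : ℕ} :
    CompatC c x y x' y' ↔ CompatC c y x y' x' := by
  unfold CompatC; omega

lemma compat_flip {c x y x' y' : ℕ} :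
    CompatC c x y x' y' ↔ CompatC c x' y' x y := by
  unfold CompatC; omega

lemma good_flip {aa L N N' x x' : ℕ} :
    GoodP aa L N N' x x' ↔ GoodP aa L N' N x' x := by
  unfold GoodP
  constructor
  · rintro (⟨h1, h2⟩ | ⟨h1, h2, h3, h4, h5⟩ | ⟨h1, h2, h3⟩)
    · exact Or.inl ⟨by omega, by omega⟩
    · exact Or.inr (Or.inl ⟨h3, h4, h1, h2, h5.symm⟩)
    · exact Or.inr (Or.inr ⟨h2, h1, by omega⟩)
  · rintro (⟨h1, h2⟩ | ⟨h1, h2, h3, h4, h5⟩ | ⟨h1, h2, h3⟩)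
    · exact Or.inl ⟨by omega, by omega⟩
    · exact Or.inr (Or.inl ⟨h3, h4, h1, h2, h5.symm⟩)
    · exact Or.inr (Or.inr ⟨h2, h1, by omega⟩)

lemma phase_transfer {aa L x x' pp pp' : ℕ} (hx : aa ≤ x) (hx' : aa ≤ x')
    (hp : aa ≤ pp) (hp' : aa ≤ pp') (heq : pp + x' = pp' + x)
    (hph : (x - aa) % L = (x' - aa) % L) :
    (pp - aa) % L = (pp' - aa) % L := by
  have h1 : (pp - aa) + (x' - aa) = (pp' - aa) + (x - aa) := by omega
  have h2 : Nat.ModEq L (x - aa) (x' - aa) := hph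
  have h3 : Nat.ModEq L ((pp - aa) + (x' - aa)) ((pp' - aa) + (x' - aa)) := by
    rw [h1]; exact Nat.ModEq.add_left _ h2
  exact Nat.ModEq.add_right_cancel' _ h3

lemma exists_max_mem {α : Type*} (l : List α) (f : α → ℕ) (P : α → Prop)
    (h0 : ∃ x ∈ l, P x) :
    ∃ y ∈ l, P y ∧ ∀ z ∈ l, P z → f z ≤ f y := by
  classical
  induction l with
  | nil => simp at h0
  | cons a t ih =>
    by_cases hex : ∃ x ∈ t, P x
    · obtain ⟨y, hy, hPy, hmax⟩ := ih hex
      by_cases hPa : P a ∧ f y ≤ f a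
      · refine ⟨a, List.mem_cons_self, hPa.1, fun z hz hPz => ?_⟩
        rcases List.mem_cons.mp hz with rfl | hz
        · exact le_refl _
        · exact (hmax z hz hPz).trans hPa.2
      · refine ⟨y, List.mem_cons_of_mem _ hy, hPy, fun z hz hPz => ?_⟩
        rcases List.mem_cons.mp hz with rfl | hz
        · by_cases h : f z ≤ f y
          · exact h
          · exact absurd ⟨hPz, by omega⟩ hPa
        · exact hmax z hz hPz
    · obtain ⟨x0, hx0, hP0⟩ := h0
      have hax : x0 = a := by
        rcases List.mem_cons.mp hx0 with rfl | h
        · rfl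
        · exact absurd ⟨x0, h, hP0⟩ hex
      subst hax
      refine ⟨x0, List.mem_cons_self, hP0, fun z hz hPz => ?_⟩
      rcases List.mem_cons.mp hz with rfl | hz
      · exact le_refl _
      · exact absurd ⟨z, hz, hPz⟩ hex

lemma exists_min_mem {α : Type*} (l : List α) (f : α → ℕ) (P : α → Prop)
    (h0 : ∃ x ∈ l, P x) :
    ∃ y ∈ l, P y ∧ ∀ z ∈ l, P z → f y ≤ f z := by
  classical
  induction l with
  | nil => simp at h0
  | cons a t ih =>
    by_cases hex : ∃ x ∈ t, P x
    · obtain ⟨y, hy, hPy, hmin⟩ := ih hex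
      by_cases hPa : P a ∧ f a ≤ f y
      · refine ⟨a, List.mem_cons_self, hPa.1, fun z hz hPz => ?_⟩
        rcases List.mem_cons.mp hz with rfl | hz
        · exact le_refl _
        · exact hPa.2.trans (hmin z hz hPz)
      · refine ⟨y, List.mem_cons_of_mem _ hy, hPy, fun z hz hPz => ?_⟩
        rcases List.mem_cons.mp hz with rfl | hz
        · by_cases h : f y ≤ f z
          · exact h
          · exact absurd ⟨hPz, by omega⟩ hPa
        · exact hmin z hz hPz
    · obtain ⟨x0, hx0, hP0⟩ := h0
      have hax : x0 = a := by
        rcases List.mem_cons.mp hx0 with rfl | h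
        · rfl
        · exact absurd ⟨x0, h, hP0⟩ hex
      subst hax
      refine ⟨x0, List.mem_cons_self, hP0, fun z hz hPz => ?_⟩
      rcases List.mem_cons.mp hz with rfl | hz
      · exact le_refl _
      · exact absurd ⟨z, hz, hPz⟩ hex

lemma extension (aa L m m' q r : ℕ) (hL : 0 < L)
    (hm : marg L q < m * L) (hm' : marg L q < m' * L) (hr : r ≤ q)
    (PB : List (ℕ × ℕ))
    (hmemA : (aa, aa) ∈ PB) (hmemN : (aa + m * L, aa + m' * L) ∈ PB)
    (hGood : ∀ pp ∈ PB, GoodP aa L (aa + m * L) (aa + m' * L) pp.1 pp.2)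
    (hpair : ∀ pp ∈ PB, ∀ qq ∈ PB, CompatC (marg L (r + 1)) pp.1 qq.1 pp.2 qq.2)
    (pos : ℕ) :
    ∃ pos', GoodP aa L (aa + m * L) (aa + m' * L) pos pos' ∧
      ∀ pp ∈ PB, CompatC (marg L r) pos pp.1 pos' pp.2 := by
  classical
  set N := aa + m * L with hN
  set N' := aa + m' * L with hN'
  set cr := marg L r with hcr
  set crs := marg L (r + 1) with hcrsdef
  have hcrs : crs = 2 * cr + L := marg_succ L r
  have hLcr : L ≤ cr := le_marg hL r
  have hcrm : cr < m * L := lt_of_le_of_lt (marg_mono L hr) hm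
  have hcrm' : cr < m' * L := lt_of_le_of_lt (marg_mono L hr) hm'
  by_cases hA : ∃ pp ∈ PB, pp.1 ≤ pos + cr ∧ pos ≤ pp.1 + cr
  · -- Case A : some pebble near pos
    obtain ⟨y, hyPB, hy1, hy2⟩ := hA
    have hgy := hGood y hyPB
    have hsa : CompatC crs y.1 aa y.2 aa := hpair y hyPB _ hmemA
    have hsN : CompatC crs y.1 N y.2 N' := hpair y hyPB _ hmemN
    have hsh : y.1 ≤ pos + y.2 := by
      rcases hsa with h | h | h
      · omega
      · rcases hgy with ⟨h1, h2⟩ | ⟨h1, h2⟩ | ⟨h1, h2⟩ <;> omega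
      · omega
    obtain ⟨pos', heq⟩ : ∃ pos', pos + y.2 = pos' + y.1 := ⟨pos + y.2 - y.1, by omega⟩
    refine ⟨pos', ?_, ?_⟩
    · -- Goodness
      rcases hgy with ⟨hp1, hp2⟩ | ⟨ha1, ha2, ha3, ha4, hph⟩ | ⟨ht1, ht2, ht3⟩
      · -- y is a prefix pebble
        have hpp : pos' = pos := by omega
        by_cases hpa : pos < aa
        · exact Or.inl ⟨hpa, by omega⟩
        · exact Or.inr (Or.inl ⟨by omega, by omega, by omega, by omega, by rw [hpp]⟩)
      · -- y is a loop pebble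
        by_cases hpa : pos < aa
        · have hs0 : y.1 = y.2 := by rcases hsa with h | h | h <;> omega
          exact Or.inl ⟨hpa, by omega⟩
        · by_cases hpN : pos < N
          · have hlow : aa ≤ pos' := by rcases hsa with h | h | h <;> omega
            have hup : pos' < N' := by rcases hsN with h | h | h <;> omega
            exact Or.inr (Or.inl ⟨by omega, hpN, hlow, hup,
              phase_transfer ha1 ha3 (by omega) hlow heq hph⟩)
          · refine Or.inr (Or.inr ⟨by omega, ?_, ?_⟩) <;>
              rcases hsN with h | h | h <;> omega
      · -- y is a tail pebble
        by_cases hpN : N ≤ pos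
        · exact Or.inr (Or.inr ⟨hpN, by omega, by omega⟩)
        · have hphN : (N - aa) % L = (N' - aa) % L := by
            rw [hN, hN']
            simp [Nat.mul_mod_left]
          refine Or.inr (Or.inl ⟨by omega, by omega, by omega, by omega,
            phase_transfer (by omega) (by omega) (by omega) (by omega)
              (by omega : pos + N' = pos' + N) hphN⟩)
    · -- compat with all pebbles
      intro z hz
      rcases hpair y hyPB z hz with h | h | h
      · exact Or.inl (by omega)
      · exact Or.inr (Or.inl ⟨by omega, by omega⟩)
      · exact Or.inr (Or.inr ⟨by omega, by omega⟩)
  · -- Case B : all pebbles far from pos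
    have hB : ∀ pp ∈ PB, pos + cr < pp.1 ∨ pp.1 + cr < pos := by
      intro pp h
      by_cases h1 : pp.1 ≤ pos + cr
      · right
        by_contra h2
        exact hA ⟨pp, h, h1, by omega⟩
      · left; omega
    rcases lt_or_ge pos aa with hpa | hpa
    · -- B1 : pos in the common prefix
      refine ⟨pos, Or.inl ⟨hpa, rfl⟩, ?_⟩
      intro z hz
      rcases hB z hz with h | h
      · refine Or.inr (Or.inl ⟨h, ?_⟩)
        rcases hGood z hz with ⟨h1, h2⟩ | ⟨h1, h2, h3, h4, _⟩ | ⟨h1, h2, _⟩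
        · omega
        · rcases hpair z hz _ hmemA with hh | hh | hh <;> omega
        · omega
      · refine Or.inr (Or.inr ⟨h, ?_⟩)
        rcases hGood z hz with ⟨h1, h2⟩ | ⟨h1, _⟩ | ⟨h1, _⟩ <;> omega
    rcases lt_or_ge pos N with hpN | hpN
    · -- B3 : pos in the loop region
      have haf : aa + cr < pos := by
        rcases hB _ hmemA with h | h <;> omega
      have hNf : pos + cr < N := by
        have h : pos + cr < N ∨ N + cr < pos := hB _ hmemN
        omega
      obtain ⟨yl, hylPB, hyl_lt, hylmax⟩ :=
        exists_max_mem PB (fun z => z.1) (fun z => z.1 < pos) ⟨(aa, aa), hmemA, show aa < pos by omega⟩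
      obtain ⟨yu, hyuPB, hyu_gt, hyumin⟩ :=
        exists_min_mem PB (fun z => z.1) (fun z => pos < z.1) ⟨(N, N'), hmemN, show pos < N by omega⟩
      have hyl_lt' : yl.1 < pos := hyl_lt
      have hyu_gt' : pos < yu.1 := hyu_gt
      have hylcr : yl.1 + cr < pos := by rcases hB yl hylPB with h | h <;> omega
      have hyucr : pos + cr < yu.1 := by rcases hB yu hyuPB with h | h <;> omega
      have hyl_ge : aa ≤ yl.1 := hylmax (aa, aa) hmemA (show aa < pos by omega)
      have hyu_le : yu.1 ≤ N := hyumin (N, N') hmemN (show pos < N by omega)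
      have hyl_loop : aa ≤ yl.1 ∧ yl.1 < N ∧ aa ≤ yl.2 ∧ yl.2 < N' ∧
          (yl.1 - aa) % L = (yl.2 - aa) % L := by
        rcases hGood yl hylPB with ⟨h1, _⟩ | h | ⟨h1, _⟩
        · omega
        · exact h
        · omega
      have hyu2 : yu.2 ≤ N' := by
        rcases hGood yu hyuPB with ⟨h1, h2⟩ | ⟨_, _, _, h4, _⟩ | ⟨h1, h2, h3⟩ <;> omega
      have hmonoL : ∀ z ∈ PB, z.1 ≤ yl.1 → z.2 ≤ yl.2 := by
        intro z hz hle
        rcases hpair z hz yl hylPB with h | h | h <;> omega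
      have hmonoU : ∀ z ∈ PB, yu.1 ≤ z.1 → yu.2 ≤ z.2 := by
        intro z hz hle
        rcases hpair yu hyuPB z hz with h | h | h <;> omega
      have htri : ∀ z ∈ PB, z.1 ≤ yl.1 ∨ yu.1 ≤ z.1 := by
        intro z hz
        rcases hB z hz with h | h
        · right; exact hyumin z hz (show pos < z.1 by omega)
        · left; exact hylmax z hz (show z.1 < pos by omega)
      rcases hpair yl hylPB yu hyuPB with hE | hF | hF
      · -- exact shift between neighbours
        obtain ⟨pos', heq⟩ : ∃ pos', pos + yl.2 = pos' + yl.1 := ⟨pos + yl.2 - yl.1, by omega⟩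
        have heq2 : pos + yu.2 = pos' + yu.1 := by omega
        refine ⟨pos', Or.inr (Or.inl ⟨by omega, hpN, by omega, by omega,
          phase_transfer hyl_loop.1 hyl_loop.2.2.1 (by omega) (by omega) heq
            hyl_loop.2.2.2.2⟩), ?_⟩
        intro z hz
        rcases htri z hz with hle | hge
        · have h2 := hmonoL z hz hle
          rcases hpair z hz yl hylPB with h | h | h
          · exact Or.inl (by omega)
          · exact Or.inr (Or.inr ⟨by omega, by omega⟩)
          · omega
        · have h2 := hmonoU z hz hge
          rcases hpair z hz yu hyuPB with h | h | h
          · exact Or.inl (by omega)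
          · omega
          · exact Or.inr (Or.inl ⟨by omega, by omega⟩)
      · -- far case : free placement with correct phase
        set d := (pos - aa) % L with hd
        set base := yl.2 + cr + 1 with hbase
        set e := (base - aa) % L with he
        have hdL : d < L := Nat.mod_lt _ hL
        have heL : e < L := Nat.mod_lt _ hL
        set pos' := if e ≤ d then base + (d - e) else base + (L + d - e) with hp'
        have hrange : base ≤ pos' ∧ pos' < base + L := by
          rw [hp']; split <;> omega
        have hphase : (pos' - aa) % L = d := by
          have hba : aa ≤ base := by omega
          have h2 : Nat.ModEq L (base - aa) e := (Nat.mod_modEq (base - aa) L).symm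
          have h3 : pos' - aa = (base - aa) + (if e ≤ d then d - e else L + d - e) := by
            rw [hp']; split <;> omega
          have h4 : Nat.ModEq L (pos' - aa) (e + (if e ≤ d then d - e else L + d - e)) := by
            rw [h3]
            exact Nat.ModEq.add_right _ h2
          have h5 : Nat.ModEq L (pos' - aa) d := by
            refine h4.trans ?_
            split
            · have : e + (d - e) = d := by omega
              rw [this]
            · have h6 : e + (L + d - e) = L + d := by omega
              rw [h6]
              show (L + d) % L = d % L
              exact Nat.add_mod_left L d
          rw [← Nat.mod_eq_of_lt hdL]
          exact h5
        have hup : pos' + cr < yu.2 := by omega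
        refine ⟨pos', Or.inr (Or.inl ⟨by omega, hpN, by omega, by omega, by
          rw [hphase, hd]⟩), ?_⟩
        intro z hz
        rcases htri z hz with hle | hge
        · have h2 := hmonoL z hz hle
          exact Or.inr (Or.inr ⟨by omega, by omega⟩)
        · have h2 := hmonoU z hz hge
          exact Or.inr (Or.inl ⟨by omega, by omega⟩)
      · omega
    · -- B2 : pos in the tail
      have hNfar : N + cr < pos := by
        have h : pos + cr < N ∨ N + cr < pos := hB _ hmemN
        omega
      obtain ⟨pos', heq⟩ : ∃ pos', pos + N' = pos' + N := ⟨pos + N' - N, by omega⟩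
      refine ⟨pos', Or.inr (Or.inr ⟨hpN, by omega, by omega⟩), ?_⟩
      intro z hz
      rcases hGood z hz with ⟨h1, h2⟩ | ⟨h1, h2, h3, h4, _⟩ | ⟨h1, h2, h3⟩
      · exact Or.inr (Or.inr ⟨by omega, by omega⟩)
      · exact Or.inr (Or.inr ⟨by omega, by omega⟩)
      · exact Or.inl (by omega)

lemma wcat_lt {u : List Γ} {v : ℕ → Γ} {n : ℕ} (h : n < u.length) :
    wcat u v n = u.get ⟨n, h⟩ := dif_pos h

lemma wcat_ge {u : List Γ} {v : ℕ → Γ} {n : ℕ} (h : u.length ≤ n) :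
    wcat u v n = v (n - u.length) := dif_neg (by omega)

lemma lpow_length (u : List Γ) (m : ℕ) : (lpow u m).length = m * u.length := by
  induction m with
  | zero => simp [lpow]
  | succ m ih => simp [lpow, ih]; ring

lemma wcat_append (u w : List Γ) (v : ℕ → Γ) :
    wcat (u ++ w) v = wcat u (wcat w v) := by
  funext n
  by_cases h : n < u.length
  · rw [wcat_lt (show n < (u ++ w).length by simp; omega), wcat_lt h]
    simp [List.get_eq_getElem, List.getElem_append_left h]
  · rw [wcat_ge (show u.length ≤ n by omega)]
    by_cases h2 : n < u.length + w.length
    · rw [wcat_lt (show n < (u ++ w).length by simp; omega),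
        wcat_lt (show n - u.length < w.length by omega)]
      simp [List.get_eq_getElem]
      rw [List.getElem_append_right (by omega)]
    · rw [wcat_ge (show (u ++ w).length ≤ n by simp; omega),
        wcat_ge (show w.length ≤ n - u.length by omega)]
      congr 1
      simp only [List.length_append]
      omega

lemma lpow_getElem? (l : List Γ) (m i : ℕ) (h : i < m * l.length) :
    (lpow l m)[i]? = l[i % l.length]? := by
  induction m generalizing i with
  | zero => simp at h
  | succ m ih =>
    have hL : 0 < l.length := by
      rcases Nat.eq_zero_or_pos l.length with h0 | h0
      · simp [h0] at h
      · exact h0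
    simp only [lpow]
    rcases lt_or_ge i l.length with hi | hi
    · rw [List.getElem?_append_left hi, Nat.mod_eq_of_lt hi]
    · rw [List.getElem?_append_right hi]
      have hmul : (m + 1) * l.length = m * l.length + l.length := by ring
      rw [ih (i - l.length) (by omega)]
      congr 1
      conv_rhs => rw [show i = (i - l.length) + l.length by omega]
      rw [Nat.add_mod_right]

lemma letter_eq {u l : List Γ} (hl0 : l ≠ []) (v : ℕ → Γ) {m m' x x' : ℕ}
    (hg : GoodP u.length l.length (u.length + m * l.length) (u.length + m' * l.length) x x') :
    wcat (u ++ lpow l m) v x = wcat (u ++ lpow l m') v x' := by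
  have hL : 0 < l.length := List.length_pos_iff.mpr hl0
  rw [wcat_append, wcat_append]
  rcases hg with ⟨h1, h2⟩ | ⟨h1, h2, h3, h4, h5⟩ | ⟨h1, h2, h3⟩
  · subst h2
    rw [wcat_lt h1, wcat_lt h1]
  · rw [wcat_ge h1, wcat_ge h3]
    have hx : x - u.length < (lpow l m).length := by rw [lpow_length]; omega
    have hx' : x' - u.length < (lpow l m').length := by rw [lpow_length]; omega
    rw [wcat_lt hx, wcat_lt hx']
    have e1 : (lpow l m)[x - u.length]? = l[(x - u.length) % l.length]? :=
      lpow_getElem? l m _ (by omega)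
    have e2 : (lpow l m')[x' - u.length]? = l[(x' - u.length) % l.length]? :=
      lpow_getElem? l m' _ (by omega)
    rw [h5] at e1
    have e3 := e1.trans e2.symm
    rw [List.getElem?_eq_getElem hx, List.getElem?_eq_getElem hx'] at e3
    simpa [List.get_eq_getElem] using e3
  · rw [wcat_ge (show u.length ≤ x by omega), wcat_ge (show u.length ≤ x' by omega)]
    rw [wcat_ge (show (lpow l m).length ≤ x - u.length by rw [lpow_length]; omega),
      wcat_ge (show (lpow l m').length ≤ x' - u.length by rw [lpow_length]; omega)]
    congr 1
    rw [lpow_length, lpow_length]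
    omega

lemma transfer {u l : List Γ} (hl0 : l ≠ []) (v : ℕ → Γ) (m m' q : ℕ)
    (hm : marg l.length q < m * l.length) (hm' : marg l.length q < m' * l.length) :
    ∀ (φ : FO Γ) (r : ℕ) (f f' : ℕ → ℕ), FO.qh φ ≤ r → r ≤ q →
    (∀ z ∈ FO.free φ, GoodP u.length l.length (u.length + m * l.length)
        (u.length + m' * l.length) (f z) (f' z)) →
    (∀ z ∈ FO.free φ, CompatC (marg l.length r) (f z) u.length (f' z) u.length) →
    (∀ z ∈ FO.free φ, CompatC (marg l.length r) (f z) (u.length + m * l.length)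
        (f' z) (u.length + m' * l.length)) →
    (∀ z ∈ FO.free φ, ∀ y ∈ FO.free φ,
        CompatC (marg l.length r) (f z) (f y) (f' z) (f' y)) →
    (FO.Sat (wcat (u ++ lpow l m) v) φ f ↔ FO.Sat (wcat (u ++ lpow l m') v) φ f') := by
  have hL : 0 < l.length := List.length_pos_iff.mpr hl0
  set aa := u.length with haa
  set L := l.length with hLdef
  set N := aa + m * L with hN
  set N' := aa + m' * L with hN'
  intro φ
  induction φ with
  | letter c z =>
    intro r f f' hqh hrq hGood hsa hsN hpair
    have hz : z ∈ FO.free (FO.letter c z) := by simp [FO.free]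
    have := letter_eq hl0 v (hGood z hz)
    simp only [FO.Sat]
    rw [this]
  | succ z z' =>
    intro r f f' hqh hrq hGood hsa hsN hpair
    have hz : z ∈ FO.free (FO.succ z z' : FO Γ) := by simp [FO.free]
    have hz' : z' ∈ FO.free (FO.succ z z' : FO Γ) := by simp [FO.free]
    have h := hpair z hz z' hz'
    have h1 : L ≤ marg L r := le_marg hL r
    simp only [FO.Sat]
    rcases h with h | h | h <;> omega
  | lt z z' =>
    intro r f f' hqh hrq hGood hsa hsN hpair
    have hz : z ∈ FO.free (FO.lt z z' : FO Γ) := by simp [FO.free]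
    have hz' : z' ∈ FO.free (FO.lt z z' : FO Γ) := by simp [FO.free]
    have h := hpair z hz z' hz'
    have h1 : L ≤ marg L r := le_marg hL r
    simp only [FO.Sat]
    rcases h with h | h | h <;> omega
  | eq z z' =>
    intro r f f' hqh hrq hGood hsa hsN hpair
    have hz : z ∈ FO.free (FO.eq z z' : FO Γ) := by simp [FO.free]
    have hz' : z' ∈ FO.free (FO.eq z z' : FO Γ) := by simp [FO.free]
    have h := hpair z hz z' hz'
    have h1 : L ≤ marg L r := le_marg hL r
    simp only [FO.Sat]
    rcases h with h | h | h <;> omega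
  | not φ ih =>
    intro r f f' hqh hrq hGood hsa hsN hpair
    simp only [FO.Sat]
    rw [ih r f f' hqh hrq hGood hsa hsN hpair]
  | and φ ψ ihφ ihψ =>
    intro r f f' hqh hrq hGood hsa hsN hpair
    have hsubφ : ∀ z ∈ FO.free φ, z ∈ FO.free (FO.and φ ψ) := by
      intro z hz; simp [FO.free, hz]
    have hsubψ : ∀ z ∈ FO.free ψ, z ∈ FO.free (FO.and φ ψ) := by
      intro z hz; simp [FO.free, hz]
    have hqφ : FO.qh φ ≤ r := by simp [FO.qh] at hqh; omega
    have hqψ : FO.qh ψ ≤ r := by simp [FO.qh] at hqh; omega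
    simp only [FO.Sat]
    rw [ihφ r f f' hqφ hrq (fun z hz => hGood z (hsubφ z hz))
        (fun z hz => hsa z (hsubφ z hz)) (fun z hz => hsN z (hsubφ z hz))
        (fun z hz y hy => hpair z (hsubφ z hz) y (hsubφ y hy)),
      ihψ r f f' hqψ hrq (fun z hz => hGood z (hsubψ z hz))
        (fun z hz => hsa z (hsubψ z hz)) (fun z hz => hsN z (hsubψ z hz))
        (fun z hz y hy => hpair z (hsubψ z hz) y (hsubψ y hy))]
  | ex z φ ih =>
    intro r f f' hqh hrq hGood hsa hsN hpair
    obtain ⟨r0, rfl⟩ : ∃ r0, r = r0 + 1 := by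
      have : 1 ≤ r := by simp [FO.qh] at hqh; omega
      exact ⟨r - 1, by omega⟩
    have hqφ : FO.qh φ ≤ r0 := by simp [FO.qh] at hqh; omega
    have hr0q : r0 ≤ q := by omega
    have hmargmono : marg L r0 ≤ marg L (r0 + 1) := marg_mono L (by omega)
    -- membership helper
    have hmem_erase : ∀ y ∈ FO.free φ, y ≠ z → y ∈ FO.free (FO.ex z φ) := by
      intro y hy hne; simp [FO.free, Finset.mem_erase, hne, hy]
    constructor
    · rintro ⟨pos, hsat⟩
      set PB : List (ℕ × ℕ) :=
        (aa, aa) :: (N, N') :: ((FO.free (FO.ex z φ)).toList.map fun y => (f y, f' y))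
        with hPB
      have hmemA : (aa, aa) ∈ PB := by simp [hPB]
      have hmemN : (N, N') ∈ PB := by simp [hPB]
      have hmempeb : ∀ y ∈ FO.free (FO.ex z φ), (f y, f' y) ∈ PB := by
        intro y hy
        simp only [hPB, List.mem_cons, List.mem_map]
        right; right
        exact ⟨y, by simp [Finset.mem_toList, hy], rfl⟩
      have hcasePB : ∀ pp ∈ PB, pp = (aa, aa) ∨ pp = (N, N') ∨
          ∃ y ∈ FO.free (FO.ex z φ), pp = (f y, f' y) := by
        intro pp hpp
        simp only [hPB, List.mem_cons, List.mem_map] at hpp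
        rcases hpp with h | h | ⟨y, hy, h⟩
        · exact Or.inl h
        · exact Or.inr (Or.inl h)
        · exact Or.inr (Or.inr ⟨y, by simpa [Finset.mem_toList] using hy, h.symm⟩)
      have hGoodPB : ∀ pp ∈ PB, GoodP aa L N N' pp.1 pp.2 := by
        intro pp hpp
        rcases hcasePB pp hpp with rfl | rfl | ⟨y, hy, rfl⟩
        · exact Or.inr (Or.inl ⟨le_refl _, by
            have := le_marg hL q; omega, le_refl _, by
            have := le_marg hL q; omega, rfl⟩)
        · exact Or.inr (Or.inr ⟨le_refl _, le_refl _, by omega⟩)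
        · exact hGood y hy
      have hpairPB : ∀ pp ∈ PB, ∀ qq ∈ PB,
          CompatC (marg L (r0 + 1)) pp.1 qq.1 pp.2 qq.2 := by
        have hmq : marg L (r0 + 1) ≤ marg L q := marg_mono L (by omega)
        intro pp hpp qq hqq
        rcases hcasePB pp hpp with rfl | rfl | ⟨y, hy, rfl⟩ <;>
          rcases hcasePB qq hqq with rfl | rfl | ⟨y2, hy2, rfl⟩
        · exact Or.inl rfl
        · exact Or.inr (Or.inl ⟨by omega, by omega⟩)
        · exact compat_swap.mp (hsa y2 hy2)
        · exact Or.inr (Or.inr ⟨by omega, by omega⟩)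
        · exact Or.inl rfl
        · exact compat_swap.mp (hsN y2 hy2)
        · exact hsa y hy
        · exact hsN y hy
        · exact hpair y hy y2 hy2
      obtain ⟨pos', hGpos, hCpos⟩ :=
        extension aa L m m' q r0 hL hm hm' hr0q PB hmemA hmemN hGoodPB hpairPB pos
      refine ⟨pos', ?_⟩
      rw [← ih r0 (Function.update f z pos) (Function.update f' z pos') hqφ
        (by omega) ?good ?seamA ?seamN ?pairs]
      · exact hsat
      case good =>
        intro y hy
        by_cases hyz : y = z
        · subst hyz; simpa [Function.update_self] using hGpos
        · rw [Function.update_of_ne hyz, Function.update_of_ne hyz]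
          exact hGood y (hmem_erase y hy hyz)
      case seamA =>
        intro y hy
        by_cases hyz : y = z
        · subst hyz
          simpa [Function.update_self] using hCpos (aa, aa) hmemA
        · rw [Function.update_of_ne hyz, Function.update_of_ne hyz]
          exact compat_mono hmargmono (hsa y (hmem_erase y hy hyz))
      case seamN =>
        intro y hy
        by_cases hyz : y = z
        · subst hyz
          simpa [Function.update_self] using hCpos (N, N') hmemN
        · rw [Function.update_of_ne hyz, Function.update_of_ne hyz]
          exact compat_mono hmargmono (hsN y (hmem_erase y hy hyz))
      case pairs =>
        intro y1 hy1 y2 hy2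
        by_cases h1 : y1 = z <;> by_cases h2 : y2 = z
        · subst h1; subst h2
          simp only [Function.update_self]
          exact Or.inl rfl
        · subst h1
          rw [Function.update_of_ne h2, Function.update_of_ne h2]
          simpa [Function.update_self] using
            hCpos (f y2, f' y2) (hmempeb y2 (hmem_erase y2 hy2 h2))
        · subst h2
          rw [Function.update_of_ne h1, Function.update_of_ne h1]
          simp only [Function.update_self]
          exact compat_swap.mp (hCpos (f y1, f' y1) (hmempeb y1 (hmem_erase y1 hy1 h1)))
        · rw [Function.update_of_ne h1, Function.update_of_ne h1,
            Function.update_of_ne h2, Function.update_of_ne h2]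
          exact compat_mono hmargmono
            (hpair y1 (hmem_erase y1 hy1 h1) y2 (hmem_erase y2 hy2 h2))
    · rintro ⟨pos', hsat⟩
      set PB : List (ℕ × ℕ) :=
        (aa, aa) :: (N', N) :: ((FO.free (FO.ex z φ)).toList.map fun y => (f' y, f y))
        with hPB
      have hmemA : (aa, aa) ∈ PB := by simp [hPB]
      have hmemN : (N', N) ∈ PB := by simp [hPB]
      have hmempeb : ∀ y ∈ FO.free (FO.ex z φ), (f' y, f y) ∈ PB := by
        intro y hy
        simp only [hPB, List.mem_cons, List.mem_map]
        right; right
        exact ⟨y, by simp [Finset.mem_toList, hy], rfl⟩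
      have hcasePB : ∀ pp ∈ PB, pp = (aa, aa) ∨ pp = (N', N) ∨
          ∃ y ∈ FO.free (FO.ex z φ), pp = (f' y, f y) := by
        intro pp hpp
        simp only [hPB, List.mem_cons, List.mem_map] at hpp
        rcases hpp with h | h | ⟨y, hy, h⟩
        · exact Or.inl h
        · exact Or.inr (Or.inl h)
        · exact Or.inr (Or.inr ⟨y, by simpa [Finset.mem_toList] using hy, h.symm⟩)
      have hGoodPB : ∀ pp ∈ PB, GoodP aa L N' N pp.1 pp.2 := by
        intro pp hpp
        rcases hcasePB pp hpp with rfl | rfl | ⟨y, hy, rfl⟩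
        · exact Or.inr (Or.inl ⟨le_refl _, by
            have := le_marg hL q; omega, le_refl _, by
            have := le_marg hL q; omega, rfl⟩)
        · exact Or.inr (Or.inr ⟨le_refl _, le_refl _, by omega⟩)
        · exact good_flip.mp (hGood y hy)
      have hpairPB : ∀ pp ∈ PB, ∀ qq ∈ PB,
          CompatC (marg L (r0 + 1)) pp.1 qq.1 pp.2 qq.2 := by
        have hmq : marg L (r0 + 1) ≤ marg L q := marg_mono L (by omega)
        intro pp hpp qq hqq
        rcases hcasePB pp hpp with rfl | rfl | ⟨y, hy, rfl⟩ <;>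
          rcases hcasePB qq hqq with rfl | rfl | ⟨y2, hy2, rfl⟩
        · exact Or.inl rfl
        · exact Or.inr (Or.inl ⟨by omega, by omega⟩)
        · exact compat_swap.mp (compat_flip.mp (hsa y2 hy2))
        · exact Or.inr (Or.inr ⟨by omega, by omega⟩)
        · exact Or.inl rfl
        · exact compat_swap.mp (compat_flip.mp (hsN y2 hy2))
        · exact compat_flip.mp (hsa y hy)
        · exact compat_flip.mp (hsN y hy)
        · exact compat_flip.mp (hpair y hy y2 hy2)
      obtain ⟨pos, hGpos, hCpos⟩ :=
        extension aa L m' m q r0 hL hm' hm hr0q PB hmemA hmemN hGoodPB hpairPB pos'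
      refine ⟨pos, ?_⟩
      rw [ih r0 (Function.update f z pos) (Function.update f' z pos') hqφ
        (by omega) ?good ?seamA ?seamN ?pairs]
      · exact hsat
      case good =>
        intro y hy
        by_cases hyz : y = z
        · subst hyz
          simp only [Function.update_self]
          exact good_flip.mpr hGpos
        · rw [Function.update_of_ne hyz, Function.update_of_ne hyz]
          exact hGood y (hmem_erase y hy hyz)
      case seamA =>
        intro y hy
        by_cases hyz : y = z
        · subst hyz
          simp only [Function.update_self]
          exact compat_flip.mp (hCpos (aa, aa) hmemA)
        · rw [Function.update_of_ne hyz, Function.update_of_ne hyz]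
          exact compat_mono hmargmono (hsa y (hmem_erase y hy hyz))
      case seamN =>
        intro y hy
        by_cases hyz : y = z
        · subst hyz
          simp only [Function.update_self]
          exact compat_flip.mp (hCpos (N', N) hmemN)
        · rw [Function.update_of_ne hyz, Function.update_of_ne hyz]
          exact compat_mono hmargmono (hsN y (hmem_erase y hy hyz))
      case pairs =>
        intro y1 hy1 y2 hy2
        by_cases h1 : y1 = z <;> by_cases h2 : y2 = z
        · subst h1; subst h2
          simp only [Function.update_self]
          exact Or.inl rfl
        · subst h1
          rw [Function.update_of_ne h2, Function.update_of_ne h2]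
          simp only [Function.update_self]
          exact compat_flip.mp (hCpos (f' y2, f y2) (hmempeb y2 (hmem_erase y2 hy2 h2)))
        · subst h2
          rw [Function.update_of_ne h1, Function.update_of_ne h1]
          simp only [Function.update_self]
          exact compat_swap.mp (compat_flip.mp
            (hCpos (f' y1, f y1) (hmempeb y1 (hmem_erase y1 hy1 h1))))
        · rw [Function.update_of_ne h1, Function.update_of_ne h1,
            Function.update_of_ne h2, Function.update_of_ne h2]
          exact compat_mono hmargmono
            (hpair y1 (hmem_erase y1 hy1 h1) y2 (hmem_erase y2 hy2 h2))

lemma pump_sentence {u l : List Γ} (hl0 : l ≠ []) (v : ℕ → Γ) {q m m' : ℕ} (ψ : FO Γ)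
    (hfree : FO.free ψ = ∅) (hqh : FO.qh ψ ≤ q)
    (hm : 2 ^ (q + 1) ≤ m) (hm' : 2 ^ (q + 1) ≤ m') :
    (FO.SatS (wcat (u ++ lpow l m) v) ψ ↔ FO.SatS (wcat (u ++ lpow l m') v) ψ) := by
  have hL : 0 < l.length := List.length_pos_iff.mpr hl0
  have hmarg : ∀ mm : ℕ, 2 ^ (q + 1) ≤ mm → marg l.length q < mm * l.length := by
    intro mm hmm
    calc marg l.length q = (2 ^ (q + 1) - 1) * l.length := rfl
      _ < 2 ^ (q + 1) * l.length := by
          have h1 : 1 ≤ 2 ^ (q + 1) := Nat.one_le_two_pow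
          exact Nat.mul_lt_mul_of_lt_of_le (by omega) le_rfl hL
      _ ≤ mm * l.length := Nat.mul_le_mul_right _ hmm
  exact transfer hl0 v m m' q (hmarg m hm) (hmarg m' hm') ψ q _ _ hqh le_rfl
    (by rw [hfree]; intro z hz; simp at hz)
    (by rw [hfree]; intro z hz; simp at hz)
    (by rw [hfree]; intro z hz; simp at hz)
    (by rw [hfree]; intro z hz; simp at hz)

/-- the middle part of the schema prefix, segments `iode`, `i+1`, ..., `i+t-1`. -/
def midPart (p l : ℕ → List Γ) (n : ℕ → ℕ) (i : ℕ) : ℕ → List Γ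
  | 0 => []
  | t + 1 => midPart p l n i t ++ (p (i + t) ++ lpow (l (i + t)) (n (i + t)))

lemma schemaPrefix_add (p l : ℕ → List Γ) (n : ℕ → ℕ) (i : ℕ) :
    ∀ t, schemaPrefix p l n (i + t) = schemaPrefix p l n i ++ midPart p l n i t := by
  intro t
  induction t with
  | zero => simp [midPart]
  | succ t ih =>
    show schemaPrefix p l n (i + t + 1) = _
    rw [show schemaPrefix p l n (i + t + 1) =
      schemaPrefix p l n (i + t) ++ (p (i + t) ++ lpow (l (i + t)) (n (i + t))) from rfl,
      ih]
    simp [midPart, List.append_assoc]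

lemma schemaPrefix_congr (p l : ℕ → List Γ) {n n' : ℕ → ℕ} (i : ℕ)
    (h : ∀ j, j < i → n j = n' j) :
    schemaPrefix p l n i = schemaPrefix p l n' i := by
  induction i with
  | zero => rfl
  | succ i ih =>
    show schemaPrefix p l n i ++ _ = schemaPrefix p l n' i ++ _
    rw [ih (fun j hj => h j (by omega)), h i (by omega)]

lemma midPart_congr (p l : ℕ → List Γ) {n n' : ℕ → ℕ} (i : ℕ)
    (h : ∀ j, i ≤ j → n j = n' j) (t : ℕ) :
    midPart p l n i t = midPart p l n' i t := by
  induction t with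
  | zero => rfl
  | succ t ih =>
    show midPart p l n i t ++ _ = midPart p l n' i t ++ _
    rw [ih, h (i + t) (by omega)]

lemma schemaWord_congr (k : ℕ) (p l : ℕ → List Γ) {n n' : ℕ → ℕ}
    (h : ∀ j, j < k - 1 → n j = n' j) (hlast : l (k - 1) ≠ []) :
    schemaWord k p l n hlast = schemaWord k p l n' hlast := by
  unfold schemaWord
  rw [schemaPrefix_congr p l (k - 1) h]

lemma schemaWord_decomp (k : ℕ) (p l : ℕ → List Γ) (n : ℕ → ℕ)
    (hlast : l (k - 1) ≠ []) (i : ℕ) (hi : i < k - 1) :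
    schemaWord k p l n hlast =
      wcat ((schemaPrefix p l n i ++ p i) ++ lpow (l i) (n i))
        (wcat (midPart p l n (i + 1) (k - 1 - (i + 1)) ++ p (k - 1))
          (womega (l (k - 1)) hlast)) := by
  unfold schemaWord
  have hpre : schemaPrefix p l n (k - 1) =
      (schemaPrefix p l n i ++ (p i ++ lpow (l i) (n i))) ++
        midPart p l n (i + 1) (k - 1 - (i + 1)) := by
    have h1 := schemaPrefix_add p l n (i + 1) (k - 1 - (i + 1))
    rw [show (i + 1) + (k - 1 - (i + 1)) = k - 1 from by omega] at h1
    rw [h1]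
    rfl
  rw [hpre]
  rw [show ((schemaPrefix p l n i ++ (p i ++ lpow (l i) (n i))) ++
      midPart p l n (i + 1) (k - 1 - (i + 1))) ++ p (k - 1) =
      ((schemaPrefix p l n i ++ p i) ++ lpow (l i) (n i)) ++
      (midPart p l n (i + 1) (k - 1 - (i + 1)) ++ p (k - 1)) from by
    simp [List.append_assoc]]
  rw [wcat_append]

lemma one_step (k : ℕ) (p l : ℕ → List Γ) (hlast : l (k - 1) ≠ [])
    (i : ℕ) (hi : i < k - 1) (hli : l i ≠ []) (n : ℕ → ℕ) (m' q : ℕ) (ψ : FO Γ)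
    (hfree : FO.free ψ = ∅) (hqh : FO.qh ψ ≤ q)
    (hbig : 2 ^ (q + 1) ≤ n i) (hbig' : 2 ^ (q + 1) ≤ m') :
    (FO.SatS (schemaWord k p l n hlast) ψ ↔
      FO.SatS (schemaWord k p l (Function.update n i m') hlast) ψ) := by
  set n' := Function.update n i m' with hn'
  rw [show schemaWord k p l n hlast = _ from schemaWord_decomp k p l n hlast i hi,
    show schemaWord k p l n' hlast = _ from schemaWord_decomp k p l n' hlast i hi]
  have e1 : schemaPrefix p l n' i = schemaPrefix p l n i :=
    schemaPrefix_congr p l i (fun j hj => Function.update_of_ne (by omega) _ _)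
  have e2 : midPart p l n' (i + 1) (k - 1 - (i + 1)) =
      midPart p l n (i + 1) (k - 1 - (i + 1)) :=
    midPart_congr p l (i + 1) (fun j hj => Function.update_of_ne (by omega) _ _) _
  have e3 : n' i = m' := Function.update_self _ _ _
  rw [e1, e2, e3]
  exact pump_sentence hli _ ψ hfree hqh hbig hbig'

lemma chain (k : ℕ) (p l : ℕ → List Γ) (hlast : l (k - 1) ≠ [])
    (hl : ∀ i, i < k → l i ≠ []) (q : ℕ) (ψ : FO Γ)
    (hfree : FO.free ψ = ∅) (hqh : FO.qh ψ ≤ q) (g g' : ℕ → ℕ)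
    (H : ∀ j, j < k - 1 → g j = g' j ∨ (2 ^ (q + 1) ≤ g j ∧ 2 ^ (q + 1) ≤ g' j)) :
    (FO.SatS (schemaWord k p l g hlast) ψ ↔ FO.SatS (schemaWord k p l g' hlast) ψ) := by
  suffices h : ∀ t, t ≤ k - 1 →
      (FO.SatS (schemaWord k p l g hlast) ψ ↔
        FO.SatS (schemaWord k p l (fun j => if j < t then g' j else g j) hlast) ψ) by
    have h2 := h (k - 1) le_rfl
    have h3 : schemaWord k p l (fun j => if j < k - 1 then g' j else g j) hlast =
        schemaWord k p l g' hlast :=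
      schemaWord_congr k p l (fun j hj => by simp [hj]) hlast
    rw [h3] at h2
    exact h2
  intro t
  induction t with
  | zero =>
    intro _
    have : schemaWord k p l (fun j => if j < 0 then g' j else g j) hlast =
        schemaWord k p l g hlast :=
      schemaWord_congr k p l (fun j hj => by simp) hlast
    rw [this]
  | succ t ih =>
    intro ht
    have ht' : t ≤ k - 1 := by omega
    refine (ih ht').trans ?_
    set gt := fun j => if j < t then g' j else g j with hgt
    have hstep : (fun j => if j < t + 1 then g' j else g j) =
        Function.update gt t (g' t) := by
      funext j
      by_cases hj : j = t
      · subst hj; simp [Function.update_self, hgt]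
      · rw [Function.update_of_ne hj]
        simp only [hgt]
        by_cases hj2 : j < t
        · simp [hj2, show j < t + 1 by omega]
        · simp [hj2, show ¬ (j < t + 1) by omega]
    rw [hstep]
    have hgtt : gt t = g t := by simp [hgt]
    rcases H t (by omega) with heq | ⟨h1, h2⟩
    · have : Function.update gt t (g' t) = gt := by
        funext j
        by_cases hj : j = t
        · subst hj; simp [Function.update_self, hgt, heq.symm]
        · rw [Function.update_of_ne hj]
      rw [this]
    · exact one_step k p l hlast t (by omega) (hl t (by omega)) gt (g' t) q ψ hfree hqh
        (by rw [hgtt]; exact h1) h2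

/-- Small-witness theorem for the intersection of a constrained path schema
(whose constraint set is presented in semilinear form with all components of
bases and periods at most `M`) with an FO sentence of quantifier height `q`. -/
theorem cps_fo_intersection {Γ : Type*} [Fintype Γ]
    (k : ℕ) (hk : 0 < k) (p l : ℕ → List Γ) (hl : ∀ i, i < k → l i ≠ [])
    (D : Set (Fin (k - 1) → ℕ)) (B0 : Finset (Fin (k - 1) → ℕ)) (α : ℕ)
    (P : Fin α → Fin (k - 1) → ℕ) (M : ℕ)
    (hD : D = {y | ∃ b ∈ B0, ∃ a : Fin α → ℕ, y = fun i => b i + ∑ j, a j * P j i})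
    (hB0 : ∀ b ∈ B0, ∀ i, b i ≤ M) (hP : ∀ j i, P j i ≤ M)
    (ψ : FO Γ) (hsent : FO.free ψ = ∅) (q : ℕ) (hq : FO.qh ψ = q) :
    (cpsLang k p l D (hl (k - 1) (by omega)) ∩ {w | FO.SatS w ψ}).Nonempty ↔
      ∃ n ∈ D, (∀ i, n i ≤ M + (2 ^ (q + 1) + 1) * α * M) ∧
        FO.SatS (schemaWord k p l (extFun n) (hl (k - 1) (by omega))) ψ := by
  constructor
  · rintro ⟨w, ⟨n0, hn0D, rfl⟩, hsat⟩
    have hn0D' := hn0D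
    rw [hD] at hn0D'
    obtain ⟨b, hb, a, hna⟩ := hn0D'
    set A := 2 ^ (q + 1) + 1 with hA
    set n' : Fin (k - 1) → ℕ := fun i => b i + ∑ j, min (a j) A * P j i with hn'
    have hn'D : n' ∈ D := by
      rw [hD]
      exact ⟨b, hb, fun j => min (a j) A, rfl⟩
    refine ⟨n', hn'D, ?_, ?_⟩
    · intro i
      have h1 : b i ≤ M := hB0 b hb i
      have h2 : ∑ j, min (a j) A * P j i ≤ ∑ _j : Fin α, A * M :=
        Finset.sum_le_sum fun j _ => Nat.mul_le_mul (min_le_right _ _) (hP j i)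
      have h3 : ∑ _j : Fin α, A * M = α * (A * M) := by
        simp [Finset.sum_const, Finset.card_univ]
      have h4 : α * (A * M) = A * α * M := by ring
      calc n' i = b i + ∑ j, min (a j) A * P j i := rfl
        _ ≤ M + α * (A * M) := by omega
        _ = M + A * α * M := by omega
        _ = M + (2 ^ (q + 1) + 1) * α * M := by rw [hA]
    · -- satisfaction transfer
      refine (chain k p l (hl (k - 1) (by omega)) hl q ψ hsent (le_of_eq hq)
        (extFun n0) (extFun n') ?_).mp hsat
      intro j hj
      have hjd : j < k - 1 := hj
      have hx : extFun n0 j = n0 ⟨j, hjd⟩ := dif_pos hjd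
      have hx' : extFun n' j = n' ⟨j, hjd⟩ := dif_pos hjd
      rw [hx, hx']
      set i : Fin (k - 1) := ⟨j, hjd⟩
      have hval : n0 i = b i + ∑ jj, a jj * P jj i := by rw [hna]
      by_cases hc : ∀ jj, min (a jj) A * P jj i = a jj * P jj i
      · left
        rw [hval]
        show b i + ∑ jj, a jj * P jj i = b i + ∑ jj, min (a jj) A * P jj i
        rw [Finset.sum_congr rfl (fun jj _ => (hc jj).symm)]
      · right
        push_neg at hc
        obtain ⟨j0, hj0⟩ := hc
        have hminj0 : min (a j0) A = A := by
          rcases le_or_gt (a j0) A with h | h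
          · exfalso; apply hj0; rw [min_eq_left h]
          · exact min_eq_right (by omega)
        have hPj0 : 1 ≤ P j0 i := by
          rcases Nat.eq_zero_or_pos (P j0 i) with h0 | h0
          · exfalso; apply hj0; rw [h0, Nat.mul_zero, Nat.mul_zero]
          · exact h0
        have hterm : A ≤ min (a j0) A * P j0 i := by
          rw [hminj0]
          calc A = A * 1 := (Nat.mul_one A).symm
            _ ≤ A * P j0 i := Nat.mul_le_mul_left A hPj0
        have hsum : min (a j0) A * P j0 i ≤ ∑ jj, min (a jj) A * P jj i :=
          Finset.single_le_sum (f := fun jj => min (a jj) A * P jj i)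
            (fun jj _ => Nat.zero_le _) (Finset.mem_univ j0)
        have hlow : A ≤ n' i := by
          have : n' i = b i + ∑ jj, min (a jj) A * P jj i := rfl
          omega
        have hle : n' i ≤ n0 i := by
          rw [hval]
          have : ∑ jj, min (a jj) A * P jj i ≤ ∑ jj, a jj * P jj i :=
            Finset.sum_le_sum fun jj _ => Nat.mul_le_mul_right _ (min_le_left _ _)
          show b i + ∑ jj, min (a jj) A * P jj i ≤ _
          omega
        constructor
        · omega
        · omega
  · rintro ⟨n, hnD, _, hsat⟩
    exact ⟨_, ⟨n, hnD, rfl⟩, hsat⟩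


end Stmt7
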